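/- For z₃, z₄ ∈ ℂ with |z₃|² + |z₄|² = 1, the 3×3 real matrices g₃(z₃+z₄j) = [[Re(z₃²−z₄²), Im(z₄²−z₃²), −2Re(z₃·conj(z₄))], [Im(z₃²+z₄²), Re(z₃²+z₄²), −2Im(z₃·conj(z₄))], [2Re(z₃z₄), −2Im(z₃z₄), |z₃|²−|z₄|²]] and ρ(z₃+z₄j) = [[|z₃|²−|z₄|², 2Im(z₃·conj(z₄)), 2Re(z₃·conj(z₄))], [2Im(z₃z₄), Re(z₃²+z₄²), Im(z₄²−z₃²)], [−2Re(z₃z₄), Im(z₃²+z₄²), Re(z₃²−z₄²)]] satisfy g₃(z₃+z₄j) = P₁₃ · ρ(z₃+z₄j)⁻¹ · P₁₃⁻¹, where P₁₃ is the matrix [[0,0,1],[0,1,0],[−1,0,0]]; here ρ(z₃+z₄j) is orthogonal, so its inverse equals its transpose. -/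

import Mathlib

set_option maxHeartbeats 1000000


open Complex

/-- The matrix `g₃(z₃ + z₄·j)` of the rotation of `S²` corresponding to right
multiplication by the unit quaternion `z₃ + z₄·j` on `ℂP¹`. -/
noncomputable def g3Mat (z₃ z₄ : ℂ) : Matrix (Fin 3) (Fin 3) ℝ :=
  !![(z₃ ^ 2 - z₄ ^ 2).re, (z₄ ^ 2 - z₃ ^ 2).im, -(2 * (z₃ * (starRingEnd ℂ) z₄).re);
     (z₃ ^ 2 + z₄ ^ 2).im, (z₃ ^ 2 + z₄ ^ 2).re, -(2 * (z₃ * (starRingEnd ℂ) z₄).im);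
     2 * (z₃ * z₄).re, -(2 * (z₃ * z₄).im), Complex.normSq z₃ - Complex.normSq z₄]

/-- The matrix `ρ(z₃ + z₄·j)` of the conjugation `v ↦ q·v·q⁻¹` on pure quaternions
in the basis `(i, j, k)`. -/
noncomputable def rhoMat (z₃ z₄ : ℂ) : Matrix (Fin 3) (Fin 3) ℝ :=
  !![Complex.normSq z₃ - Complex.normSq z₄,
       2 * (z₃ * (starRingEnd ℂ) z₄).im, 2 * (z₃ * (starRingEnd ℂ) z₄).re;
     2 * (z₃ * z₄).im, (z₃ ^ 2 + z₄ ^ 2).re, (z₄ ^ 2 - z₃ ^ 2).im;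
     -(2 * (z₃ * z₄).re), (z₃ ^ 2 + z₄ ^ 2).im, (z₃ ^ 2 - z₄ ^ 2).re]

/-- The matrix `P₁₃`. -/
noncomputable def P13 : Matrix (Fin 3) (Fin 3) ℝ :=
  !![0, 0, 1; 0, 1, 0; -1, 0, 0]

theorem P13_inv : P13⁻¹ = !![0, 0, -1; 0, 1, 0; (1:ℝ), 0, 0] := by
  apply Matrix.inv_eq_right_inv
  ext i j
  fin_cases i <;> fin_cases j <;>
    simp [P13, Matrix.mul_apply, Fin.sum_univ_three, Matrix.one_apply, Matrix.vecHead, Matrix.vecTail]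

/-- For a unit quaternion `z₃ + z₄·j`, the matrix `ρ(z₃+z₄j)` is orthogonal (so that its
inverse is its transpose) and `g₃(z₃+z₄j) = P₁₃ · ρ(z₃+z₄j)⁻¹ · P₁₃⁻¹`. -/
theorem g3_eq_P13_rho_inv_P13_inv (z₃ z₄ : ℂ)
    (hunit : Complex.normSq z₃ + Complex.normSq z₄ = 1) :
    (rhoMat z₃ z₄).transpose * rhoMat z₃ z₄ = 1 ∧
    (rhoMat z₃ z₄)⁻¹ = (rhoMat z₃ z₄).transpose ∧
    g3Mat z₃ z₄ = P13 * (rhoMat z₃ z₄)⁻¹ * P13⁻¹ := by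
  obtain ⟨a, b⟩ := z₃
  obtain ⟨c, d⟩ := z₄
  simp [Complex.normSq_mk] at hunit
  have hT : (rhoMat ⟨a, b⟩ ⟨c, d⟩).transpose * rhoMat ⟨a, b⟩ ⟨c, d⟩ = 1 := by
    ext i j
    fin_cases i <;> fin_cases j <;>
      simp [rhoMat, Matrix.mul_apply, Matrix.transpose_apply, Fin.sum_univ_three,
        Complex.normSq_mk, pow_two, Complex.mul_re, Complex.mul_im, Matrix.one_apply, Matrix.vecHead, Matrix.vecTail] <;>
      nlinarith [hunit]
  have hinv : (rhoMat ⟨a, b⟩ ⟨c, d⟩)⁻¹ = (rhoMat ⟨a, b⟩ ⟨c, d⟩).transpose :=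
    Matrix.inv_eq_left_inv hT
  refine ⟨hT, hinv, ?_⟩
  rw [hinv, P13_inv]
  ext i j
  fin_cases i <;> fin_cases j <;>
    simp [rhoMat, g3Mat, P13, Matrix.mul_apply, Matrix.transpose_apply, Fin.sum_univ_three,
      Complex.normSq_mk, pow_two, Complex.mul_re, Complex.mul_im,
      Matrix.vecHead, Matrix.vecTail, Matrix.vecMul, dotProduct] <;> ring
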